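/- Let T be a positive trace-preserving linear map on M_n and let A = I − T (as a linear endomorphism of M_n). Then A has index at most 1, i.e. range(A²) = range(A), and consequently the group inverse of A exists: there is a unique linear map A^# on M_n satisfying A A^# A = A, A^# A A^# = A^#, and A A^# = A^# A. -/

import Mathlib

open Matrix
open scoped ComplexOrder

noncomputable section

/-- The algebra of `n × n` complex matrices. -/
abbrev Mn (n : ℕ) : Type := Matrix (Fin n) (Fin n) ℂ

/-- The map `X ↦ Q X Q`. -/
def sandwich {n : ℕ} (Q : Mn n) : Module.End ℂ (Mn n) :=
  (LinearMap.mulLeft ℂ Q).comp (LinearMap.mulRight ℂ Q)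

/-- The sum of the two components of a pair. -/
def sumPair (n : ℕ) : (Mn n × Mn n) →ₗ[ℂ] Mn n :=
  LinearMap.fst ℂ (Mn n) (Mn n) + LinearMap.snd ℂ (Mn n) (Mn n)

/-- The QMC `Λ_{T,V}` induced by the channel `T` and the subspace `V` (with orthogonal
projection `P` onto `V` and `Q = I − P`):
`Λ(X₁,X₂) = ((I−ℚ)(T(X₁+X₂)), ℚ(T(X₁+X₂)))` where `ℚ(Y) = QYQ`. -/
def Lam {n : ℕ} (T : Module.End ℂ (Mn n)) (Q : Mn n) : Module.End ℂ (Mn n × Mn n) :=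
  LinearMap.prod
    (((1 : Module.End ℂ (Mn n)) - sandwich Q) ∘ₗ (T ∘ₗ sumPair n))
    ((sandwich Q) ∘ₗ (T ∘ₗ sumPair n))

/-- `ℙ₁(X₁,X₂) = (X₁,0)`. -/
def proj1 (n : ℕ) : Module.End ℂ (Mn n × Mn n) :=
  (LinearMap.inl ℂ (Mn n) (Mn n)).comp (LinearMap.fst ℂ (Mn n) (Mn n))

/-- `ℙ₂(X₁,X₂) = (0,X₂)`. -/
def proj2 (n : ℕ) : Module.End ℂ (Mn n × Mn n) :=
  (LinearMap.inr ℂ (Mn n) (Mn n)).comp (LinearMap.snd ℂ (Mn n) (Mn n))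

/-- The block-diagonal part `S_d = diag(S₁₁,S₂₂)` of a map on `M_n ⊕ M_n`. -/
def diagPart {n : ℕ} (S : Module.End ℂ (Mn n × Mn n)) : Module.End ℂ (Mn n × Mn n) :=
  proj1 n * S * proj1 n + proj2 n * S * proj2 n

/-- The map `E(X₁,X₂) = (X₁+X₂, X₁+X₂)`. -/
def Emap (n : ℕ) : Module.End ℂ (Mn n × Mn n) :=
  LinearMap.prod (sumPair n) (sumPair n)

/-- The map `Θ_W(X₁,X₂) = Tr(X₁+X₂)·W`. -/
def Theta {n : ℕ} (W : Mn n × Mn n) : Module.End ℂ (Mn n × Mn n) :=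
  ((Matrix.traceLinearMap (Fin n) ℂ ℂ) ∘ₗ sumPair n).smulRight W

/-- The mean hitting time `τ(ρ → V) = Σ_{r ≥ 1} r·Tr(ℙT(ℚT)^{r−1} ρ)`. -/
def tau {n : ℕ} (T : Module.End ℂ (Mn n)) (P Q : Mn n) (ρ : Mn n) : ℂ :=
  ∑' r : ℕ, ((r : ℂ) + 1) * ((sandwich P * T * (sandwich Q * T) ^ r) ρ).trace

/-- The pure state `ρ_φ = |φ⟩⟨φ|`. -/
def rhoOf {n : ℕ} (φ : Fin n → ℂ) : Mn n := Matrix.vecMulVec φ (star φ)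

/-- A positive map on `M_n`. -/
def IsPosMap {n : ℕ} (T : Module.End ℂ (Mn n)) : Prop :=
  ∀ X : Mn n, X.PosSemidef → (T X).PosSemidef

/-- A trace-preserving map on `M_n`. -/
def IsTracePreserving {n : ℕ} (T : Module.End ℂ (Mn n)) : Prop :=
  ∀ X : Mn n, (T X).trace = X.trace

/-- A quantum channel: a completely positive trace-preserving map, given by a Kraus
decomposition `T(X) = Σᵢ Vᵢ X Vᵢ*` with `Σᵢ Vᵢ* Vᵢ = I`. -/
def IsChannel {n : ℕ} (T : Module.End ℂ (Mn n)) : Prop :=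
  ∃ (k : ℕ) (V : Fin k → Mn n),
    (∀ X : Mn n, T X = ∑ i, V i * X * (V i)ᴴ) ∧ (∑ i, (V i)ᴴ * V i = 1)

/-- Irreducibility of a positive map on `M_n`: the only orthogonal projections `P` with
`T(P M_n P) ⊆ P M_n P` are `P = 0` and `P = I`. -/
def IsIrreducibleMap {n : ℕ} (T : Module.End ℂ (Mn n)) : Prop :=
  ∀ P : Mn n, P.IsHermitian → P * P = P →
    (∀ X : Mn n, ∃ Y : Mn n, T (P * X * P) = P * Y * P) → P = 0 ∨ P = 1

lemma aux_entry_bound {n : ℕ} {P : Mn n} (hP : P.PosSemidef) (i j : Fin n) :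
    ‖P i j‖ ≤ P.trace.re := by
  obtain ⟨B, hB⟩ : ∃ B : Mn n, P = Bᴴ * B := by
    open scoped MatrixOrder Norms.L2Operator in
    exact CStarAlgebra.nonneg_iff_eq_star_mul_self.mp hP.nonneg
  set v : Fin n → EuclideanSpace ℂ (Fin n) := fun a => WithLp.toLp 2 (fun k => B k a) with hv
  have hentry : ∀ a b : Fin n, P a b = inner ℂ (v a) (v b) := by
    intro a b
    simp [hB, Matrix.mul_apply, Matrix.conjTranspose_apply, PiLp.inner_apply,
      RCLike.inner_apply, hv]
    exact Finset.sum_congr rfl fun _ _ => mul_comm _ _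
  have hdiag : ∀ a, (P a a).re = ‖v a‖ ^ 2 := by
    intro a
    rw [hentry a a]
    exact inner_self_eq_norm_sq (𝕜 := ℂ) (v a)
  have htr : P.trace.re = ∑ a, ‖v a‖ ^ 2 := by
    rw [Matrix.trace, Complex.re_sum]
    exact Finset.sum_congr rfl fun a _ => hdiag a
  have hS : ∀ a, ‖v a‖ ^ 2 ≤ P.trace.re := by
    intro a
    rw [htr]
    exact Finset.single_le_sum (f := fun b => ‖v b‖ ^ 2) (fun b _ => sq_nonneg _) (Finset.mem_univ a)
  have h1 : ‖P i j‖ ≤ ‖v i‖ * ‖v j‖ := by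
    rw [hentry i j]
    exact norm_inner_le_norm (𝕜 := ℂ) _ _
  nlinarith [hS i, hS j, norm_nonneg (v i), norm_nonneg (v j), sq_nonneg (‖v i‖ - ‖v j‖)]

lemma aux_herm_decomp {n : ℕ} {H : Mn n} (hH : H.IsHermitian) :
    ∃ P Q : Mn n, P.PosSemidef ∧ Q.PosSemidef ∧ H = P - Q := by
  classical
  set U : Mn n := (hH.eigenvectorUnitary : Mn n) with hU
  set dp : Fin n → ℂ := fun i => ((max (hH.eigenvalues i) 0 : ℝ) : ℂ) with hdp
  set dm : Fin n → ℂ := fun i => ((max (-(hH.eigenvalues i)) 0 : ℝ) : ℂ) with hdm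
  have hdpn : (0 : Fin n → ℂ) ≤ dp := Pi.le_def.mpr fun i =>
    Complex.zero_le_real.mpr (le_max_right _ _)
  have hdmn : (0 : Fin n → ℂ) ≤ dm := Pi.le_def.mpr fun i =>
    Complex.zero_le_real.mpr (le_max_right _ _)
  refine ⟨U * Matrix.diagonal dp * Uᴴ, U * Matrix.diagonal dm * Uᴴ,
    (Matrix.PosSemidef.diagonal hdpn).mul_mul_conjTranspose_same U,
    (Matrix.PosSemidef.diagonal hdmn).mul_mul_conjTranspose_same U, ?_⟩
  rw [← Matrix.sub_mul, ← Matrix.mul_sub]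
  have hfun : Matrix.diagonal dp - Matrix.diagonal dm
      = Matrix.diagonal (RCLike.ofReal ∘ hH.eigenvalues) := by
    ext a b
    by_cases hab : a = b
    · subst hab
      simp only [Matrix.sub_apply, Matrix.diagonal_apply_eq, hdp, hdm, Function.comp_apply]
      rw [← Complex.ofReal_sub]
      norm_cast
      rcases le_total (hH.eigenvalues a) 0 with h | h <;>
        simp [max_eq_left, max_eq_right, h]
    · simp [Matrix.diagonal_apply_ne _ hab]
  rw [hfun]
  have := hH.spectral_theorem
  rwa [Unitary.conjStarAlgAut_apply, Matrix.star_eq_conjTranspose] at this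

lemma aux_decomp4 {n : ℕ} (X : Mn n) :
    ∃ P₁ P₂ P₃ P₄ : Mn n, P₁.PosSemidef ∧ P₂.PosSemidef ∧ P₃.PosSemidef ∧ P₄.PosSemidef ∧
      X = (P₁ - P₂) + Complex.I • (P₃ - P₄) := by
  have h1 : ((2⁻¹ : ℂ) • (X + Xᴴ)).IsHermitian := by
    rw [Matrix.IsHermitian, Matrix.conjTranspose_smul, Matrix.conjTranspose_add,
      Matrix.conjTranspose_conjTranspose]
    rw [show (star (2⁻¹ : ℂ)) = (2⁻¹ : ℂ) by simp]
    module
  have h2 : ((-(2⁻¹) * Complex.I : ℂ) • (X - Xᴴ)).IsHermitian := by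
    rw [Matrix.IsHermitian, Matrix.conjTranspose_smul, Matrix.conjTranspose_sub,
      Matrix.conjTranspose_conjTranspose]
    rw [show (star (-(2⁻¹) * Complex.I : ℂ)) = ((2⁻¹) * Complex.I : ℂ) by
      simp [Complex.star_def, Complex.conj_I]]
    module
  obtain ⟨P₁, P₂, hP₁, hP₂, hE1⟩ := aux_herm_decomp h1
  obtain ⟨P₃, P₄, hP₃, hP₄, hE2⟩ := aux_herm_decomp h2
  refine ⟨P₁, P₂, P₃, P₄, hP₁, hP₂, hP₃, hP₄, ?_⟩
  rw [← hE1, ← hE2, smul_smul,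
    show Complex.I * (-(2⁻¹) * Complex.I) = (2⁻¹ : ℂ) by
      rw [mul_comm, mul_assoc, Complex.I_mul_I]; ring]
  module

lemma aux_bounded {n : ℕ} {T : Module.End ℂ (Mn n)} (hTpos : IsPosMap T)
    (hTtr : IsTracePreserving T) (X : Mn n) :
    ∃ C : ℝ, ∀ (k : ℕ) (i j : Fin n), ‖((T ^ k) X) i j‖ ≤ C := by
  have key : ∀ (P : Mn n), P.PosSemidef → ∀ k : ℕ,
      ((T ^ k) P).PosSemidef ∧ ((T ^ k) P).trace = P.trace := by
    intro P hP k
    induction k with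
    | zero => simpa using hP
    | succ k ih =>
      have h : (T ^ (k + 1)) P = T ((T ^ k) P) := by
        rw [pow_succ', Module.End.mul_apply]
      rw [h]
      exact ⟨hTpos _ ih.1, by rw [hTtr]; exact ih.2⟩
  obtain ⟨P₁, P₂, P₃, P₄, h₁, h₂, h₃, h₄, hX⟩ := aux_decomp4 X
  refine ⟨P₁.trace.re + P₂.trace.re + P₃.trace.re + P₄.trace.re, fun k i j => ?_⟩
  have hx : ((T ^ k) X) i j = (((T ^ k) P₁) i j - ((T ^ k) P₂) i j)
      + Complex.I * (((T ^ k) P₃) i j - ((T ^ k) P₄) i j) := by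
    rw [hX]
    simp [map_add, map_sub, _root_.map_smul, Matrix.add_apply, Matrix.sub_apply,
      Matrix.smul_apply, smul_eq_mul, mul_sub]
  have b₁ := aux_entry_bound (key P₁ h₁ k).1 i j
  have b₂ := aux_entry_bound (key P₂ h₂ k).1 i j
  have b₃ := aux_entry_bound (key P₃ h₃ k).1 i j
  have b₄ := aux_entry_bound (key P₄ h₄ k).1 i j
  rw [(key P₁ h₁ k).2] at b₁; rw [(key P₂ h₂ k).2] at b₂
  rw [(key P₃ h₃ k).2] at b₃; rw [(key P₄ h₄ k).2] at b₄
  calc ‖((T ^ k) X) i j‖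
      ≤ ‖((T ^ k) P₁) i j - ((T ^ k) P₂) i j‖
        + ‖Complex.I * (((T ^ k) P₃) i j - ((T ^ k) P₄) i j)‖ := by rw [hx]; exact norm_add_le _ _
    _ ≤ (‖((T ^ k) P₁) i j‖ + ‖((T ^ k) P₂) i j‖)
        + (‖((T ^ k) P₃) i j‖ + ‖((T ^ k) P₄) i j‖) := by
        rw [norm_mul, Complex.norm_I, one_mul]
        gcongr <;> exact norm_sub_le _ _
    _ ≤ _ := by linarith

lemma aux_ker {n : ℕ} {T : Module.End ℂ (Mn n)} (hTpos : IsPosMap T)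
    (hTtr : IsTracePreserving T) (A : Module.End ℂ (Mn n)) (hA : A = 1 - T)
    (x : Mn n) (hx : A (A x) = 0) : A x = 0 := by
  set y := A x with hy
  have hyx : y = x - T x := by rw [hy, hA]; simp
  have hTy : T y = y := by
    have h0 : y - T y = 0 := by
      have := hx
      rw [hA] at this
      simpa using this
    have := sub_eq_zero.mp h0
    exact this.symm
  have hTx : T x = x - y := by rw [hyx]; abel
  have hIter : ∀ k : ℕ, (T ^ k) x = x - (k : ℂ) • y := by
    intro k
    induction k with
    | zero => simp
    | succ k ih =>
      rw [pow_succ', Module.End.mul_apply, ih, map_sub, _root_.map_smul, hTy, hTx]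
      push_cast
      module
  by_contra hy0
  obtain ⟨C, hC⟩ := aux_bounded hTpos hTtr x
  have hEnt : ∃ i j, y i j ≠ 0 := by
    by_contra h
    push_neg at h
    exact hy0 (by ext i j; simpa using h i j)
  obtain ⟨i, j, hij⟩ := hEnt
  have hb : ∀ k : ℕ, (k : ℝ) * ‖y i j‖ ≤ C + ‖x i j‖ := by
    intro k
    have h1 := hC k i j
    rw [hIter k] at h1
    have h2 : ((x - (k : ℂ) • y) i j) = x i j - (k : ℂ) * y i j := by
      simp [Matrix.sub_apply, Matrix.smul_apply, smul_eq_mul]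
    rw [h2] at h1
    have h3 : ‖(k : ℂ) * y i j‖ - ‖x i j‖ ≤ ‖x i j - (k : ℂ) * y i j‖ := by
      rw [norm_sub_rev]
      exact norm_sub_norm_le _ _
    have h4 : ‖(k : ℂ) * y i j‖ = (k : ℝ) * ‖y i j‖ := by
      rw [norm_mul, Complex.norm_natCast]
    linarith
  obtain ⟨k, hk⟩ := exists_nat_gt ((C + ‖x i j‖) / ‖y i j‖)
  have hy' : (0 : ℝ) < ‖y i j‖ := norm_pos_iff.mpr hij
  have := hb k
  rw [div_lt_iff₀ hy'] at hk
  linarith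

/-- For a positive trace-preserving `T` on `M_n` and `A = I − T`, the index
of `A` is at most 1, i.e. `range(A²) = range(A)`, and consequently the group inverse of
`A` exists and is unique. -/
theorem stmt6 {n : ℕ} (T : Module.End ℂ (Mn n))
    (hTpos : IsPosMap T) (hTtr : IsTracePreserving T)
    (A : Module.End ℂ (Mn n)) (hA : A = 1 - T) :
    LinearMap.range (A ^ 2) = LinearMap.range A ∧
    (∃! B : Module.End ℂ (Mn n), A * B * A = A ∧ B * A * B = B ∧ A * B = B * A) := by
  classical
  have hker : ∀ x : Mn n, A (A x) = 0 → A x = 0 := aux_ker hTpos hTtr A hA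
  have hk2 : LinearMap.ker (A ^ 2) = LinearMap.ker A := by
    apply le_antisymm
    · intro x hx
      rw [LinearMap.mem_ker] at *
      exact hker x (by rw [← Module.End.mul_apply, ← sq]; exact hx)
    · intro x hx
      rw [LinearMap.mem_ker] at *
      rw [sq, Module.End.mul_apply, hx, map_zero]
  have hrange : LinearMap.range (A ^ 2) = LinearMap.range A := by
    have hle : LinearMap.range (A ^ 2) ≤ LinearMap.range A := by
      rintro _ ⟨x, rfl⟩
      exact ⟨A x, by rw [sq, Module.End.mul_apply]⟩
    apply Submodule.eq_of_le_of_finrank_le hle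
    have e1 := LinearMap.finrank_range_add_finrank_ker (A ^ 2)
    have e2 := LinearMap.finrank_range_add_finrank_ker A
    rw [hk2] at e1
    omega
  refine ⟨hrange, ?_⟩
  set W := LinearMap.range A with hWdef
  set K := LinearMap.ker A with hKdef
  have hdisj : Disjoint W K := by
    rw [Submodule.disjoint_def]
    rintro _ ⟨y, rfl⟩ hxK
    exact hker y (LinearMap.mem_ker.mp hxK)
  have hcompl : IsCompl W K := by
    refine ⟨hdisj, ?_⟩
    rw [codisjoint_iff]
    apply Submodule.eq_top_of_finrank_eq
    have h1 := Submodule.finrank_sup_add_finrank_inf_eq W K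
    have h2 : W ⊓ K = ⊥ := hdisj.eq_bot
    have h3 := LinearMap.finrank_range_add_finrank_ker A
    rw [h2] at h1
    simp only [finrank_bot, add_zero] at h1
    rw [h1]
    exact h3
  set π := Submodule.linearProjOfIsCompl W K hcompl with hπdef
  have hmem : ∀ x : Mn n, A x ∈ W := fun x => LinearMap.mem_range.mpr ⟨x, rfl⟩
  set g : W →ₗ[ℂ] W := A.restrict (fun x _ => hmem x) with hgdef
  have hgco : ∀ w : W, (g w : Mn n) = A (w : Mn n) := fun w => rfl
  have hginj : Function.Injective g := by
    intro a b hab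
    have h1 : A (a : Mn n) = A (b : Mn n) := by
      rw [← hgco, ← hgco, hab]
    have hmW : (a : Mn n) - b ∈ W := Submodule.sub_mem W a.2 b.2
    have hmK : (a : Mn n) - b ∈ K := by
      rw [hKdef, LinearMap.mem_ker, map_sub, h1, sub_self]
    have h0 := Submodule.disjoint_def.mp hdisj _ hmW hmK
    exact Subtype.ext (sub_eq_zero.mp h0)
  have hgsurj : Function.Surjective g := LinearMap.injective_iff_surjective.mp hginj
  set e : W ≃ₗ[ℂ] W := LinearEquiv.ofBijective g ⟨hginj, hgsurj⟩ with hedef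
  set B : Module.End ℂ (Mn n) := W.subtype ∘ₗ (e.symm.toLinearMap) ∘ₗ π with hBdef
  have hAw : ∀ w : W, A (w : Mn n) = ((e w : W) : Mn n) := fun w => rfl
  have hBx : ∀ x : Mn n, B x = ((e.symm (π x) : W) : Mn n) := fun x => rfl
  have hAB : ∀ x : Mn n, (A * B) x = ((π x : W) : Mn n) := by
    intro x
    rw [Module.End.mul_apply, hBx, hAw, LinearEquiv.apply_symm_apply]
  have hπA : ∀ x : Mn n, π (A x) = ⟨A x, hmem x⟩ := fun x =>
    Submodule.linearProjOfIsCompl_apply_left hcompl ⟨A x, hmem x⟩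
  have hπ0 : ∀ x : Mn n, π (x - ((π x : W) : Mn n)) = 0 := by
    intro x
    rw [map_sub, show π ((π x : W) : Mn n) = π x from
      Submodule.projectionOnto_apply_left hcompl (π x), sub_self]
  have hsub : ∀ x : Mn n, x - ((π x : W) : Mn n) ∈ K := fun x =>
    (Submodule.linearProjOfIsCompl_apply_eq_zero_iff hcompl).mp (hπ0 x)
  have hAπ : ∀ x : Mn n, A ((π x : W) : Mn n) = A x := by
    intro x
    have h0 : A (x - ((π x : W) : Mn n)) = 0 := hsub x
    rw [map_sub, sub_eq_zero] at h0
    exact h0.symm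
  have hBA : ∀ x : Mn n, (B * A) x = ((π x : W) : Mn n) := by
    intro x
    rw [Module.End.mul_apply, hBx, hπA]
    have h : (⟨A x, hmem x⟩ : W) = e (π x) := by
      apply Subtype.ext
      rw [← hAw]
      exact (hAπ x).symm
    rw [h, LinearEquiv.symm_apply_apply]
  have hABeq : A * B = B * A := by
    apply LinearMap.ext
    intro x
    rw [hAB, hBA]
  have hABA : A * B * A = A := by
    apply LinearMap.ext
    intro x
    rw [Module.End.mul_apply, hAB, hπA]
  have hBmemW : ∀ x : Mn n, B x ∈ W := fun x => (e.symm (π x)).2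
  have hBAB : B * A * B = B := by
    apply LinearMap.ext
    intro x
    rw [Module.End.mul_apply, hBA,
      show π (B x) = ⟨B x, hBmemW x⟩ from
        Submodule.linearProjOfIsCompl_apply_left hcompl ⟨B x, hBmemW x⟩]
  refine ⟨B, ⟨hABA, hBAB, hABeq⟩, ?_⟩
  rintro C ⟨hC1, hC2, hC3⟩
  have hCK : ∀ k, k ∈ K → C k = 0 := by
    intro k hk
    have h0 : A k = 0 := LinearMap.mem_ker.mp hk
    calc C k = (C * A * C) k := by rw [hC2]
      _ = (C * (A * C)) k := by rw [mul_assoc]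
      _ = (C * (C * A)) k := by rw [hC3]
      _ = C (C (A k)) := rfl
      _ = 0 := by rw [h0, map_zero, map_zero]
  have hBK : ∀ k, k ∈ K → B k = 0 := by
    intro k hk
    rw [hBx, show π k = 0 from (Submodule.linearProjOfIsCompl_apply_eq_zero_iff hcompl).mpr hk]
    simp
  have hCW : ∀ w, w ∈ W → C w = B w := by
    rintro _ ⟨y, rfl⟩
    have hCmem : C (A y) ∈ W := by
      have h : C (A y) = A (C y) := by
        rw [← Module.End.mul_apply, ← hC3, Module.End.mul_apply]
      rw [h]; exact hmem _
    have hACA : A (C (A y)) = A y := by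
      have h : A (C (A y)) = (A * C * A) y := rfl
      rw [h, hC1]
    have hABA' : A (B (A y)) = A y := by
      have h : A (B (A y)) = (A * B * A) y := rfl
      rw [h, hABA]
    have hdW : C (A y) - B (A y) ∈ W := Submodule.sub_mem W hCmem (hBmemW _)
    have hdK : C (A y) - B (A y) ∈ K := by
      rw [hKdef, LinearMap.mem_ker, map_sub, hACA, hABA', sub_self]
    exact sub_eq_zero.mp (Submodule.disjoint_def.mp hdisj _ hdW hdK)
  apply LinearMap.ext
  intro x
  have hxd : x = ((π x : W) : Mn n) + (x - ((π x : W) : Mn n)) := by abel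
  calc C x = C (((π x : W) : Mn n)) + C (x - ((π x : W) : Mn n)) := by
        rw [← map_add, ← hxd]
    _ = B (((π x : W) : Mn n)) + B (x - ((π x : W) : Mn n)) := by
        rw [hCW _ (π x).2, hCK _ (hsub x), hBK _ (hsub x)]
    _ = B x := by rw [← map_add, ← hxd]
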